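/- arXiv:1305.0348 — 2 statements merged into one kernel-verified Lean document; each statement's English description precedes it below -/
import Mathlib

section
/- Let $\alpha$ be irrational, $M$ a large positive integer, and let $s_1 \in [1,M]$ be the unique integer with $\|s_1\alpha\| = \min_{1 \leq s \leq M}\|s\alpha\|$. Then for any $c > 0$ and $M$ sufficiently large, every integer $b \in [1,M]$ with $\|b\alpha\| \leq M^{-(1+c)}$ is divisible by $s_1$. -/
/-- Distance from a real number to the nearest integer. -/
noncomputable def nearestIntDist (x : ℝ) : ℝ := |x - round x|

lemma nearestIntDist_le (x : ℝ) (n : ℤ) : nearestIntDist x ≤ |x - n| :=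
  round_le x n

/-- every very good approximant `b ≤ M` (with `‖bα‖ ≤ M^{-(1+c)}`)
is a multiple of the best approximant `s₁`. -/
theorem good_approximants_multiples_of_best (α : ℝ) (hα : Irrational α) :
    ∀ c > (0 : ℝ), ∃ M₀ : ℕ, ∀ M : ℕ, M₀ ≤ M → ∀ s₁ : ℕ,
      s₁ ∈ Finset.Icc 1 M →
      (∀ s ∈ Finset.Icc 1 M, s ≠ s₁ → nearestIntDist (s₁ * α) < nearestIntDist (s * α)) →
      ∀ b ∈ Finset.Icc 1 M,
        nearestIntDist (b * α) ≤ (M : ℝ) ^ (-(1 + c)) → s₁ ∣ b := by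
  intro c hc
  refine ⟨⌈(2:ℝ)^(1/c)⌉₊ + 1, ?_⟩
  intro M hM s₁ hs₁ hmin b hb hgood
  rcases eq_or_ne b s₁ with rfl | hne
  · exact dvd_refl _
  have hs₁' := Finset.mem_Icc.mp hs₁
  have hb' := Finset.mem_Icc.mp hb
  have hMpos : 0 < M := lt_of_lt_of_le hs₁'.1 hs₁'.2
  have hMR : (0:ℝ) < (M:ℝ) := by exact_mod_cast hMpos
  have hM2 : (2:ℝ) < (M:ℝ)^(c:ℝ) := by
    have h1 : ((2:ℝ)^(1/c)) < (M:ℝ) := by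
      calc ((2:ℝ)^(1/c)) ≤ (⌈(2:ℝ)^(1/c)⌉₊ : ℝ) := Nat.le_ceil _
        _ < (M:ℝ) := by exact_mod_cast Nat.lt_of_lt_of_le (Nat.lt_succ_self _) hM
    have h2 : ((2:ℝ)^(1/c))^(c:ℝ) < (M:ℝ)^(c:ℝ) :=
      Real.rpow_lt_rpow (by positivity) h1 hc
    rwa [← Real.rpow_mul (by norm_num), one_div, inv_mul_cancel₀ (ne_of_gt hc),
      Real.rpow_one] at h2
  have hsmall : 2 * ((M:ℝ) * (M:ℝ)^(-(1+c))) < 1 := by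
    have h3 : (M:ℝ) * (M:ℝ)^(-(1+c)) = (M:ℝ)^(-c:ℝ) := by
      rw [show -(1+c) = -1 + -c by ring, Real.rpow_add hMR, Real.rpow_neg_one]
      field_simp
    rw [h3, Real.rpow_neg (le_of_lt hMR)]
    have h4 : ((M:ℝ)^(c:ℝ))⁻¹ < 2⁻¹ :=
      inv_strictAnti₀ (by norm_num) hM2
    rw [show (1:ℝ) = 2 * 2⁻¹ by norm_num]
    exact mul_lt_mul_of_pos_left h4 (by norm_num)
  set p : ℤ := round ((s₁:ℝ) * α) with hp
  set P : ℤ := round ((b:ℝ) * α) with hP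
  set δ : ℝ := nearestIntDist ((s₁:ℝ) * α) with hδdef
  set ε : ℝ := nearestIntDist ((b:ℝ) * α) with hεdef
  have hδeq : δ = |(s₁:ℝ) * α - (p:ℝ)| := rfl
  have hεeq : ε = |(b:ℝ) * α - (P:ℝ)| := rfl
  have hδε : δ < ε := hmin b hb hne
  have hδpos : 0 < δ := by
    have hirr : Irrational ((s₁:ℝ) * α) := hα.natCast_mul (Nat.one_le_iff_ne_zero.mp hs₁'.1)
    rw [hδeq]
    exact abs_pos.mpr (sub_ne_zero.mpr (hirr.ne_int p))
  -- Step 1 : b * p = s₁ * P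
  have key : (b : ℤ) * p = (s₁ : ℤ) * P := by
    have hrw : (((b:ℤ) * p - (s₁:ℤ) * P : ℤ) : ℝ)
        = (b:ℝ) * ((p:ℝ) - (s₁:ℝ)*α) + (s₁:ℝ) * ((b:ℝ)*α - (P:ℝ)) := by
      push_cast; ring
    have h1 : |(b:ℝ) * ((p:ℝ) - (s₁:ℝ)*α)| ≤ (M:ℝ) * (M:ℝ)^(-(1+c)) := by
      rw [abs_mul, abs_sub_comm, Nat.abs_cast]
      have hδM : |(s₁:ℝ)*α - (p:ℝ)| ≤ (M:ℝ)^(-(1+c)) := by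
        rw [← hδeq]; exact le_of_lt (lt_of_lt_of_le hδε hgood)
      exact mul_le_mul (by exact_mod_cast hb'.2) hδM (abs_nonneg _) (le_of_lt hMR)
    have h2 : |(s₁:ℝ) * ((b:ℝ)*α - (P:ℝ))| ≤ (M:ℝ) * (M:ℝ)^(-(1+c)) := by
      rw [abs_mul, Nat.abs_cast]
      have hεM : |(b:ℝ)*α - (P:ℝ)| ≤ (M:ℝ)^(-(1+c)) := by rw [← hεeq]; exact hgood
      exact mul_le_mul (by exact_mod_cast hs₁'.2) hεM (abs_nonneg _) (le_of_lt hMR)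
    have habs : |(((b:ℤ) * p - (s₁:ℤ) * P : ℤ) : ℝ)| < 1 := by
      rw [hrw]
      calc |(b:ℝ) * ((p:ℝ) - (s₁:ℝ)*α) + (s₁:ℝ) * ((b:ℝ)*α - (P:ℝ))|
          ≤ _ + _ := abs_add_le _ _
        _ ≤ (M:ℝ) * (M:ℝ)^(-(1+c)) + (M:ℝ) * (M:ℝ)^(-(1+c)) := add_le_add h1 h2
        _ < 1 := by linarith
    have h0 : ((b:ℤ) * p - (s₁:ℤ) * P : ℤ) = 0 :=
      Int.abs_lt_one_iff.mp (by exact_mod_cast habs)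
    linarith [h0]
  -- Step 2 : s₁ and p are coprime
  have hcop : Nat.Coprime s₁ p.natAbs := by
    by_contra hg
    set g := Nat.gcd s₁ p.natAbs with hgdef
    have hgdvd : g ∣ s₁ := Nat.gcd_dvd_left _ _
    have hgpos : 0 < g := Nat.gcd_pos_of_pos_left _ hs₁'.1
    have hg1 : g ≠ 1 := fun h => hg h
    have hg2 : 2 ≤ g := by omega
    set t := s₁ / g with htdef
    have hts : t * g = s₁ := Nat.div_mul_cancel hgdvd
    have htpos : 1 ≤ t := by
      rcases Nat.eq_zero_or_pos t with h0 | h0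
      · rw [h0, zero_mul] at hts; omega
      · exact h0
    have htlt : t < s₁ := by
      by_contra h
      push_neg at h
      nlinarith [hts, hg2, htpos]
    have htM : t ∈ Finset.Icc 1 M := Finset.mem_Icc.mpr ⟨htpos, le_trans (le_of_lt htlt) hs₁'.2⟩
    -- q with p = g * q
    obtain ⟨q, hq⟩ : (g:ℤ) ∣ p := by
      rw [Int.natCast_dvd]
      exact Nat.gcd_dvd_right _ _
    have hgR : (0:ℝ) < (g:ℝ) := by exact_mod_cast hgpos
    have hkey2 : |(t:ℝ)*α - (q:ℝ)| = δ / g := by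
      have hmul : ((t:ℝ)*α - (q:ℝ)) * (g:ℝ) = (s₁:ℝ)*α - (p:ℝ) := by
        have h1 : ((t:ℕ):ℝ) * ((g:ℕ):ℝ) = ((s₁:ℕ):ℝ) := by exact_mod_cast congrArg (Nat.cast : ℕ → ℝ) hts
        have h2 : ((g:ℕ):ℝ) * ((q:ℤ):ℝ) = ((p:ℤ):ℝ) := by exact_mod_cast congrArg (Int.cast : ℤ → ℝ) hq.symm
        linear_combination α * h1 - h2
      have := congrArg abs hmul
      rw [abs_mul, Nat.abs_cast] at this
      rw [hδeq, ← this]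
      field_simp
    have hlt : nearestIntDist ((t:ℝ)*α) < δ := by
      calc nearestIntDist ((t:ℝ)*α) ≤ |(t:ℝ)*α - (q:ℝ)| := nearestIntDist_le _ q
        _ = δ / g := hkey2
        _ < δ := by
          apply div_lt_self hδpos
          exact_mod_cast (by omega : 1 < g)
    exact absurd (hmin t htM (Nat.ne_of_lt htlt)) (not_lt.mpr (le_of_lt hlt))
  -- Conclusion
  have hdvdZ : (s₁:ℤ) ∣ (b:ℤ) := by
    have hdvd : (s₁:ℤ) ∣ (b:ℤ) * p := ⟨P, key⟩
    have hic : IsCoprime (s₁:ℤ) p := by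
      rw [Int.isCoprime_iff_gcd_eq_one]
      simpa [Int.gcd] using hcop
    exact hic.dvd_of_dvd_mul_right hdvd
  exact_mod_cast hdvdZ
end

section
/- For every $x \geq 1$, $\sum_{d \leq x,\ d \text{ squarefree},\ (d,W)=1} \mu(d)^2/\varphi(d) \gg \frac{\varphi(W)}{W} \log x$, where $W$ is a fixed positive integer and the implied constant is absolute. -/
open Finset

private lemma geom_range_le {r : ℝ} (h0 : 0 ≤ r) (h1 : r < 1) (K : ℕ) :
    ∑ e ∈ Finset.range K, r ^ e ≤ (1 - r)⁻¹ :=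
  ((summable_geometric_of_lt_one h0 h1).sum_le_tsum (Finset.range K) (fun i _ => pow_nonneg h0 i)
    ).trans_eq (tsum_geometric_of_lt_one h0 h1)

private lemma geom_Icc_le {p : ℕ} (hp : 2 ≤ p) (K : ℕ) :
    ∑ e ∈ Finset.Icc 1 K, ((1 : ℝ) / p) ^ e ≤ 1 / ((p : ℝ) - 1) := by
  have hp1 : (1 : ℝ) < p := by exact_mod_cast hp
  have hp0 : (0 : ℝ) < p := by linarith
  have h0 : (0 : ℝ) ≤ 1 / p := by positivity
  have h1 : (1 : ℝ) / p < 1 := by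
    rw [div_lt_one hp0]; exact hp1
  have hins : Finset.range (K + 1) = insert 0 (Finset.Icc 1 K) := by
    ext e
    simp only [Finset.mem_range, Finset.mem_insert, Finset.mem_Icc]
    omega
  have h2 : (1 : ℝ) + ∑ e ∈ Finset.Icc 1 K, ((1 : ℝ) / p) ^ e ≤ (1 - 1 / (p : ℝ))⁻¹ := by
    have := geom_range_le h0 h1 (K + 1)
    rw [hins, Finset.sum_insert (by simp)] at this
    simpa using this
  have hne : (p : ℝ) - 1 ≠ 0 := by linarith
  have key : (1 - 1 / (p : ℝ))⁻¹ - 1 = 1 / ((p : ℝ) - 1) := by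
    have e1 : (1 : ℝ) - 1 / p = ((p : ℝ) - 1) / p := by field_simp
    rw [e1, inv_div]
    field_simp
    ring
  linarith [h2]

/-- Master counting lemma: encode each integer with prime factors in `s` by its
exponent vector. -/
private lemma master_bound (s : Finset ℕ) (N : ℕ) (t : ℕ → Finset ℕ) :
    ∑ a ∈ (Finset.Icc 1 N).filter
        (fun a => a.primeFactors ⊆ s ∧ ∀ p ∈ s, a.factorization p ∈ t p),
      (1 : ℝ) / a ≤ ∏ p ∈ s, ∑ e ∈ t p, ((1 : ℝ) / p) ^ e := by
  classical
  rw [Finset.prod_sum]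
  set F := (Finset.Icc 1 N).filter
      (fun a => a.primeFactors ⊆ s ∧ ∀ p ∈ s, a.factorization p ∈ t p) with hF
  have hmem : ∀ a ∈ F, a ≠ 0 ∧ a.primeFactors ⊆ s ∧ ∀ p ∈ s, a.factorization p ∈ t p := by
    intro a ha
    rw [hF, Finset.mem_filter, Finset.mem_Icc] at ha
    exact ⟨by omega, ha.2⟩
  have hprod : ∀ a ∈ F, ∏ p ∈ s, p ^ a.factorization p = a := by
    intro a ha
    obtain ⟨ha0, hsub, -⟩ := hmem a ha
    have h1 : ∏ p ∈ a.primeFactors, p ^ a.factorization p = a := by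
      rw [← Nat.prod_factorization_eq_prod_primeFactors (fun p k => p ^ k)]
      exact Nat.factorization_prod_pow_eq_self ha0
    refine (Finset.prod_subset hsub fun p _ hp => ?_).symm.trans h1
    have : a.factorization p = 0 := by
      have := Finsupp.notMem_support_iff.mp (by rwa [Nat.support_factorization])
      exact this
    rw [this, pow_zero]
  have key : ∀ a ∈ F, (1 : ℝ) / a
      = ∏ x ∈ s.attach, ((1 : ℝ) / (x.1 : ℝ)) ^ (a.factorization x.1) := by
    intro a ha
    have h2 : (a : ℝ) = ∏ p ∈ s, (p : ℝ) ^ a.factorization p := by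
      calc (a : ℝ) = ((∏ p ∈ s, p ^ a.factorization p : ℕ) : ℝ) :=
            Nat.cast_inj.mpr (hprod a ha).symm
        _ = ∏ p ∈ s, (p : ℝ) ^ a.factorization p := by push_cast; rfl
    rw [Finset.prod_attach s (fun p => ((1 : ℝ) / (p : ℝ)) ^ a.factorization p)]
    rw [h2, one_div, ← Finset.prod_inv_distrib]
    exact Finset.prod_congr rfl fun p _ => by rw [one_div, inv_pow]
  rw [Finset.sum_congr rfl key]
  set enc : ℕ → (∀ p ∈ s, ℕ) := fun a => fun p _ => a.factorization p with henc
  have hinj : ∀ a ∈ F, ∀ b ∈ F, enc a = enc b → a = b := by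
    intro a ha b hb hab
    obtain ⟨ha0, hsa, -⟩ := hmem a ha
    obtain ⟨hb0, hsb, -⟩ := hmem b hb
    have hfact : a.factorization = b.factorization := by
      ext p
      by_cases hp : p ∈ s
      · exact congrFun (congrFun hab p) hp
      · have h1 : a.factorization p = 0 :=
          Finsupp.notMem_support_iff.mp (by rw [Nat.support_factorization]; exact fun h => hp (hsa h))
        have h2 : b.factorization p = 0 :=
          Finsupp.notMem_support_iff.mp (by rw [Nat.support_factorization]; exact fun h => hp (hsb h))
        rw [h1, h2]
    exact Nat.factorization_inj ha0 hb0 hfact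
  set g : (∀ p ∈ s, ℕ) → ℝ := fun f => ∏ x ∈ s.attach, ((1 : ℝ) / (x.1 : ℝ)) ^ (f x.1 x.2)
    with hg
  have hstep : ∑ a ∈ F, ∏ x ∈ s.attach, ((1 : ℝ) / (x.1 : ℝ)) ^ (a.factorization x.1)
      = ∑ a ∈ F, g (enc a) := rfl
  have himg : ∑ a ∈ F, g (enc a) = ∑ f ∈ F.image enc, g f := (Finset.sum_image hinj).symm
  rw [hstep, himg]
  refine Finset.sum_le_sum_of_subset_of_nonneg ?_ ?_
  · intro f hf
    obtain ⟨a, ha, rfl⟩ := Finset.mem_image.mp hf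
    obtain ⟨-, -, ht⟩ := hmem a ha
    rw [Finset.mem_pi]
    exact fun p hp => ht p hp
  · intro f _ _
    exact Finset.prod_nonneg fun x _ => pow_nonneg (by positivity) _

private lemma prod_one_sub_inv_eq {W : ℕ} (hW : W ≠ 0) :
    ∏ p ∈ W.primeFactors, (1 - (1 : ℝ) / p)⁻¹ = (W : ℝ) / (W.totient : ℝ) := by
  have hφ : (0 : ℝ) < (W.totient : ℝ) := by
    exact_mod_cast Nat.totient_pos.mpr (Nat.pos_of_ne_zero hW)
  have hid : (W.totient : ℝ) = (W : ℝ) * ∏ p ∈ W.primeFactors, (1 - (1 : ℝ) / p) := by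
    have := Nat.totient_eq_mul_prod_factors W
    have h2 : ((W.totient : ℚ) : ℝ) = ((W : ℚ) * ∏ p ∈ W.primeFactors, (1 - (p : ℚ)⁻¹) : ℚ) := by
      exact_mod_cast congrArg (fun q : ℚ => (q : ℝ)) this
    push_cast at h2
    simpa [one_div] using h2
  have hprodpos : (0 : ℝ) < ∏ p ∈ W.primeFactors, (1 - (1 : ℝ) / p) := by
    apply Finset.prod_pos
    intro p hp
    have hp2 : 2 ≤ p := (Nat.prime_of_mem_primeFactors hp).two_le
    have hp1 : (1 : ℝ) < p := by exact_mod_cast hp2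
    have : (1 : ℝ) / p < 1 := by
      rw [div_lt_one (by linarith)]; exact hp1
    linarith
  rw [Finset.prod_inv_distrib]
  rw [eq_div_iff (ne_of_gt hφ), hid, mul_comm (W : ℝ), ← mul_assoc,
    inv_mul_cancel₀ hprodpos.ne', one_mul]

private lemma A_bound (W N : ℕ) (hW : 1 ≤ W) :
    ∑ a ∈ (Finset.Icc 1 N).filter (fun a => a.primeFactors ⊆ W.primeFactors),
      (1 : ℝ) / a ≤ (W : ℝ) / (W.totient : ℝ) := by
  have heq : (Finset.Icc 1 N).filter (fun a => a.primeFactors ⊆ W.primeFactors)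
      = (Finset.Icc 1 N).filter
        (fun a => a.primeFactors ⊆ W.primeFactors ∧
          ∀ p ∈ W.primeFactors, a.factorization p ∈ Finset.range (N + 1)) := by
    apply Finset.filter_congr
    intro a ha
    rw [Finset.mem_Icc] at ha
    simp only [Finset.mem_range]
    constructor
    · intro h
      refine ⟨h, fun p _ => ?_⟩
      have := Nat.factorization_lt p (show a ≠ 0 by omega)
      omega
    · exact fun h => h.1
  rw [heq]
  refine (master_bound W.primeFactors N (fun _ => Finset.range (N + 1))).trans ?_
  rw [← prod_one_sub_inv_eq (show W ≠ 0 by omega)]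
  apply Finset.prod_le_prod
  · intro p _
    exact Finset.sum_nonneg fun e _ => pow_nonneg (by positivity) _
  · intro p hp
    have hp2 : 2 ≤ p := (Nat.prime_of_mem_primeFactors hp).two_le
    have hp1 : (1 : ℝ) < p := by exact_mod_cast hp2
    have h0 : (0 : ℝ) ≤ 1 / p := by positivity
    have h1 : (1 : ℝ) / p < 1 := by rw [div_lt_one (by linarith)]; exact hp1
    exact geom_range_le h0 h1 (N + 1)

private lemma totient_squarefree_cast {d : ℕ} (hd : Squarefree d) :
    (d.totient : ℝ) = ∏ p ∈ d.primeFactors, ((p : ℝ) - 1) := by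
  have hd0 : d ≠ 0 := hd.ne_zero
  have h1 : d.totient * ∏ p ∈ d.primeFactors, p = d * ∏ p ∈ d.primeFactors, (p - 1) :=
    Nat.totient_mul_prod_primeFactors d
  rw [Nat.prod_primeFactors_of_squarefree hd] at h1
  have h2 : d.totient = ∏ p ∈ d.primeFactors, (p - 1) := by
    have hd' : 0 < d := Nat.pos_of_ne_zero hd0
    have := h1
    rw [mul_comm (d.totient) d] at this
    exact Nat.eq_of_mul_eq_mul_left hd' this
  rw [h2]
  push_cast
  refine Finset.prod_congr rfl fun p hp => ?_
  have : 1 ≤ p := (Nat.prime_of_mem_primeFactors hp).one_le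
  rw [Nat.cast_sub this, Nat.cast_one]

private lemma fiber_bound (d N : ℕ) (hd : Squarefree d) :
    ∑ b ∈ (Finset.Icc 1 N).filter (fun b => b.primeFactors = d.primeFactors),
      (1 : ℝ) / b ≤ 1 / (d.totient : ℝ) := by
  have heq : (Finset.Icc 1 N).filter (fun b => b.primeFactors = d.primeFactors)
      = (Finset.Icc 1 N).filter
        (fun b => b.primeFactors ⊆ d.primeFactors ∧
          ∀ p ∈ d.primeFactors, b.factorization p ∈ Finset.Icc 1 N) := by
    apply Finset.filter_congr
    intro b hb
    rw [Finset.mem_Icc] at hb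
    have hb0 : b ≠ 0 := by omega
    simp only [Finset.mem_Icc]
    constructor
    · intro h
      refine ⟨h.le, fun p hp => ?_⟩
      rw [← h] at hp
      have hνpos : b.factorization p ≠ 0 := by
        rw [← Nat.support_factorization] at hp
        exact Finsupp.mem_support_iff.mp hp
      have hlt := Nat.factorization_lt p hb0
      omega
    · intro h
      refine Finset.Subset.antisymm h.1 fun p hp => ?_
      have := (h.2 p hp).1
      rw [← Nat.support_factorization]
      exact Finsupp.mem_support_iff.mpr (by omega)
  rw [heq]
  refine (master_bound d.primeFactors N (fun _ => Finset.Icc 1 N)).trans ?_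
  have htot : (1 : ℝ) / (d.totient : ℝ) = ∏ p ∈ d.primeFactors, (1 / ((p : ℝ) - 1)) := by
    rw [totient_squarefree_cast hd]
    simp [one_div, ← Finset.prod_inv_distrib]
  rw [htot]
  apply Finset.prod_le_prod
  · intro p _
    exact Finset.sum_nonneg fun e _ => pow_nonneg (by positivity) _
  · intro p hp
    exact geom_Icc_le (Nat.prime_of_mem_primeFactors hp).two_le N

private lemma squarefree_prod_primes {s : Finset ℕ} (hs : ∀ p ∈ s, p.Prime) :
    Squarefree (∏ p ∈ s, p) := by
  classical
  induction s using Finset.induction with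
  | empty => simpa using squarefree_one
  | @insert p s hps ih =>
    rw [Finset.prod_insert hps]
    have hp := hs p (Finset.mem_insert_self _ _)
    have hrest : ∀ q ∈ s, q.Prime := fun q hq => hs q (Finset.mem_insert_of_mem hq)
    have hcop : Nat.Coprime p (∏ q ∈ s, q) :=
      Nat.Coprime.prod_right fun q hq =>
        (Nat.coprime_primes hp (hrest q hq)).mpr (by rintro rfl; exact hps hq)
    exact (Nat.squarefree_mul hcop).mpr ⟨hp.prime.squarefree, ih hrest⟩

private lemma coprime_sum_le (W N : ℕ) (hW : 1 ≤ W) :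
    ∑ b ∈ (Finset.Icc 1 N).filter (fun b => Nat.Coprime b W), (1 : ℝ) / b
      ≤ ∑ d ∈ (Finset.Icc 1 N).filter (fun d => Squarefree d ∧ Nat.Coprime d W),
          (1 : ℝ) / (d.totient : ℝ) := by
  classical
  set B := (Finset.Icc 1 N).filter (fun b => Nat.Coprime b W) with hB
  set D := (Finset.Icc 1 N).filter (fun d => Squarefree d ∧ Nat.Coprime d W) with hD
  set rad : ℕ → ℕ := fun b => ∏ p ∈ b.primeFactors, p with hrad
  have hBmem : ∀ b ∈ B, (1 ≤ b ∧ b ≤ N) ∧ Nat.Coprime b W := by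
    intro b hb
    rw [hB, Finset.mem_filter, Finset.mem_Icc] at hb
    exact hb
  have hradpf : ∀ b : ℕ, (rad b).primeFactors = b.primeFactors := fun b =>
    Nat.primeFactors_prod fun p hp => Nat.prime_of_mem_primeFactors hp
  have hmaps : ∀ b ∈ B, rad b ∈ D := by
    intro b hb
    obtain ⟨⟨hb1, hbN⟩, hbW⟩ := hBmem b hb
    have hb0 : 0 < b := hb1
    have hdvd : rad b ∣ b := Nat.prod_primeFactors_dvd b
    have hrb1 : 1 ≤ rad b := Nat.pos_of_dvd_of_pos hdvd hb0
    have hrbN : rad b ≤ N := (Nat.le_of_dvd hb0 hdvd).trans hbN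
    have hsq : Squarefree (rad b) :=
      squarefree_prod_primes fun p hp => Nat.prime_of_mem_primeFactors hp
    have hcop : Nat.Coprime (rad b) W := by
      rcases eq_or_ne b 0 with rfl | hb0'
      · omega
      · refine (Nat.disjoint_primeFactors hsq.ne_zero (by omega)).mp ?_
        rw [hradpf b]
        exact hbW.disjoint_primeFactors
    rw [hD, Finset.mem_filter, Finset.mem_Icc]
    exact ⟨⟨hrb1, hrbN⟩, hsq, hcop⟩
  rw [← Finset.sum_fiberwise_of_maps_to hmaps (fun b => (1 : ℝ) / b)]
  apply Finset.sum_le_sum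
  intro d hd
  have hdmem : (1 ≤ d ∧ d ≤ N) ∧ Squarefree d ∧ Nat.Coprime d W := by
    rw [hD, Finset.mem_filter, Finset.mem_Icc] at hd
    exact hd
  refine le_trans (Finset.sum_le_sum_of_subset_of_nonneg ?_ ?_) (fiber_bound d N hdmem.2.1)
  · intro b hb
    rw [Finset.mem_filter] at hb
    obtain ⟨hbB, hbd⟩ := hb
    obtain ⟨⟨hb1, hbN⟩, -⟩ := hBmem b hbB
    rw [Finset.mem_filter, Finset.mem_Icc]
    refine ⟨⟨hb1, hbN⟩, ?_⟩
    rw [← hbd, hradpf b]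
  · intro b _ _
    positivity

private lemma split_bound (W N : ℕ) (hW : 1 ≤ W) :
    ∑ n ∈ Finset.Icc 1 N, (1 : ℝ) / n
      ≤ (∑ a ∈ (Finset.Icc 1 N).filter (fun a => a.primeFactors ⊆ W.primeFactors),
            (1 : ℝ) / a)
        * ∑ b ∈ (Finset.Icc 1 N).filter (fun b => Nat.Coprime b W), (1 : ℝ) / b := by
  classical
  set A := (Finset.Icc 1 N).filter (fun a => a.primeFactors ⊆ W.primeFactors) with hA
  set B := (Finset.Icc 1 N).filter (fun b => Nat.Coprime b W) with hB
  set aW : ℕ → ℕ := fun n => ∏ p ∈ n.primeFactors ∩ W.primeFactors, p ^ n.factorization p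
    with haW
  have hprodn : ∀ n : ℕ, n ≠ 0 → ∏ p ∈ n.primeFactors, p ^ n.factorization p = n := by
    intro n hn
    rw [← Nat.prod_factorization_eq_prod_primeFactors (fun p k => p ^ k)]
    exact Nat.factorization_prod_pow_eq_self hn
  have hdvd : ∀ n : ℕ, n ≠ 0 → aW n ∣ n := by
    intro n hn
    have := Finset.prod_dvd_prod_of_subset (n.primeFactors ∩ W.primeFactors) n.primeFactors
      (fun p => p ^ n.factorization p) Finset.inter_subset_left
    rwa [hprodn n hn] at this
  -- facts for n in Icc 1 N
  have hfacts : ∀ n ∈ Finset.Icc 1 N,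
      aW n ∈ A ∧ n / aW n ∈ B ∧ aW n * (n / aW n) = n := by
    intro n hn
    rw [Finset.mem_Icc] at hn
    have hn0 : n ≠ 0 := by omega
    have hd := hdvd n hn0
    have ha0 : aW n ≠ 0 := fun h => hn0 (Nat.eq_zero_of_zero_dvd (h ▸ hd))
    have hmul : aW n * (n / aW n) = n := Nat.mul_div_cancel' hd
    have hb0 : n / aW n ≠ 0 := by
      intro h
      rw [h, mul_zero] at hmul
      exact hn0 hmul.symm
    have haA : aW n ∈ A := by
      rw [hA, Finset.mem_filter, Finset.mem_Icc]
      refine ⟨⟨Nat.pos_of_ne_zero ha0, (Nat.le_of_dvd (by omega) hd).trans hn.2⟩, ?_⟩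
      intro q hq
      have hqp := Nat.prime_of_mem_primeFactors hq
      have hqdvd : q ∣ aW n := Nat.dvd_of_mem_primeFactors hq
      rw [haW] at hqdvd
      obtain ⟨p, hp, hqp'⟩ := (Nat.Prime.prime hqp).dvd_finset_prod_iff
        (fun p => p ^ n.factorization p) |>.mp hqdvd
      have hpmem : p ∈ n.primeFactors ∩ W.primeFactors := hp
      have hpprime : p.Prime :=
        Nat.prime_of_mem_primeFactors (Finset.mem_inter.mp hpmem).1
      have : q = p := by
        have hq_dvd_p : q ∣ p := hqp.dvd_of_dvd_pow hqp'
        exact ((Nat.prime_dvd_prime_iff_eq hqp hpprime).mp hq_dvd_p)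
      rw [this]
      exact (Finset.mem_inter.mp hpmem).2
    have hbB : n / aW n ∈ B := by
      rw [hB, Finset.mem_filter, Finset.mem_Icc]
      have hbdvd : n / aW n ∣ n := Nat.div_dvd_of_dvd hd
      refine ⟨⟨Nat.pos_of_ne_zero hb0, (Nat.le_of_dvd (by omega) hbdvd).trans hn.2⟩, ?_⟩
      by_contra hnc
      obtain ⟨p, hpp, hpb, hpW⟩ := Nat.Prime.not_coprime_iff_dvd.mp hnc
      have hpn : p ∣ n := hpb.trans hbdvd
      have hpmem : p ∈ n.primeFactors ∩ W.primeFactors := by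
        rw [Finset.mem_inter]
        exact ⟨Nat.mem_primeFactors.mpr ⟨hpp, hpn, hn0⟩,
          Nat.mem_primeFactors.mpr ⟨hpp, hpW, by omega⟩⟩
      have hpow : p ^ n.factorization p ∣ aW n :=
        Finset.dvd_prod_of_mem (fun p => p ^ n.factorization p) hpmem
      have h' : p ^ n.factorization p * p ∣ aW n * (n / aW n) := mul_dvd_mul hpow hpb
      rw [hmul] at h'
      exact Nat.pow_succ_factorization_not_dvd hn0 hpp (by rw [pow_succ]; exact h')
    exact ⟨haA, hbB, hmul⟩
  -- pass to the product set
  have hsum : (∑ a ∈ A, (1 : ℝ) / a) * ∑ b ∈ B, (1 : ℝ) / b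
      = ∑ q ∈ A ×ˢ B, (1 : ℝ) / q.1 * ((1 : ℝ) / q.2) := by
    rw [Finset.sum_mul_sum]
    rw [Finset.sum_product]
  rw [hsum]
  set m : ℕ → ℕ × ℕ := fun n => (aW n, n / aW n) with hm
  have hinj : ∀ x ∈ Finset.Icc 1 N, ∀ y ∈ Finset.Icc 1 N, m x = m y → x = y := by
    intro x hx y hy hxy
    have hx' := (hfacts x hx).2.2
    have hy' := (hfacts y hy).2.2
    rw [hm] at hxy
    have h1 : aW x = aW y := congrArg Prod.fst hxy
    have h2 : x / aW x = y / aW y := congrArg Prod.snd hxy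
    calc x = aW x * (x / aW x) := hx'.symm
      _ = aW y * (y / aW y) := by rw [h2, h1]
      _ = y := hy'
  have hval : ∀ n ∈ Finset.Icc 1 N, (1 : ℝ) / n = (1 : ℝ) / (m n).1 * ((1 : ℝ) / (m n).2) := by
    intro n hn
    have hmul := (hfacts n hn).2.2
    rw [hm]
    have : (n : ℝ) = (aW n : ℝ) * ((n / aW n : ℕ) : ℝ) := by
      exact_mod_cast (congrArg (fun k : ℕ => (k : ℝ)) hmul).symm
    rw [this]
    rw [one_div, mul_inv, one_div, one_div]
  rw [Finset.sum_congr rfl hval]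
  set g2 : ℕ × ℕ → ℝ := fun q => (1 : ℝ) / q.1 * ((1 : ℝ) / q.2) with hg2
  have hstep : ∑ n ∈ Finset.Icc 1 N, (1 : ℝ) / (m n).1 * ((1 : ℝ) / (m n).2)
      = ∑ n ∈ Finset.Icc 1 N, g2 (m n) := rfl
  have himg : ∑ n ∈ Finset.Icc 1 N, g2 (m n) = ∑ q ∈ (Finset.Icc 1 N).image m, g2 q :=
    (Finset.sum_image hinj).symm
  rw [hstep, himg]
  refine Finset.sum_le_sum_of_subset_of_nonneg ?_ ?_
  · intro q hq
    obtain ⟨n, hn, rfl⟩ := Finset.mem_image.mp hq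
    rw [Finset.mem_product]
    exact ⟨(hfacts n hn).1, (hfacts n hn).2.1⟩
  · intro q _ _
    positivity

/-- lower bound `∑_{d ≤ x, squarefree, (d,W)=1} μ(d)²/φ(d) ≫ (φ(W)/W) log x`. -/
theorem squarefree_coprime_totient_sum_lower :
    ∃ c : ℝ, 0 < c ∧ ∀ W : ℕ, 1 ≤ W → ∀ x : ℝ, 1 ≤ x →
      (∑ d ∈ (Finset.Icc 1 ⌊x⌋₊).filter (fun d => Squarefree d ∧ Nat.Coprime d W),
          (1 : ℝ) / (Nat.totient d : ℝ))
        ≥ c * ((Nat.totient W : ℝ) / (W : ℝ)) * Real.log x := by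
  refine ⟨1, one_pos, ?_⟩
  intro W hW x hx
  set N := ⌊x⌋₊ with hN
  have hφ : 0 < W.totient := Nat.totient_pos.mpr hW
  have hWR : (0 : ℝ) < W := by exact_mod_cast hW
  have hφR : (0 : ℝ) < (W.totient : ℝ) := by exact_mod_cast hφ
  set S := ∑ d ∈ (Finset.Icc 1 N).filter (fun d => Squarefree d ∧ Nat.Coprime d W),
      (1 : ℝ) / (Nat.totient d : ℝ) with hS
  have hSnonneg : 0 ≤ S := Finset.sum_nonneg fun d _ => by positivity
  have hlog : Real.log x ≤ ∑ n ∈ Finset.Icc 1 N, (1 : ℝ) / n := by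
    have h1 := log_le_harmonic_floor x (by linarith)
    have h2 : ((harmonic N : ℚ) : ℝ) = ∑ n ∈ Finset.Icc 1 N, (1 : ℝ) / n := by
      rw [harmonic_eq_sum_Icc]
      push_cast
      simp [one_div]
    rw [← hN] at h1
    linarith [h1, h2.le, h2.ge]
  have hBnonneg : (0 : ℝ)
      ≤ ∑ b ∈ (Finset.Icc 1 N).filter (fun b => Nat.Coprime b W), (1 : ℝ) / b :=
    Finset.sum_nonneg fun b _ => by positivity
  have hchain : ∑ n ∈ Finset.Icc 1 N, (1 : ℝ) / n ≤ ((W : ℝ) / (W.totient : ℝ)) * S := by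
    refine (split_bound W N hW).trans ?_
    refine mul_le_mul (A_bound W N hW) (coprime_sum_le W N hW) hBnonneg ?_
    positivity
  have hfinal : Real.log x ≤ ((W : ℝ) / (W.totient : ℝ)) * S := hlog.trans hchain
  have hpos : (0 : ℝ) < (W.totient : ℝ) / (W : ℝ) := by positivity
  have := mul_le_mul_of_nonneg_left hfinal hpos.le
  have heq : (W.totient : ℝ) / (W : ℝ) * (((W : ℝ) / (W.totient : ℝ)) * S) = S := by
    field_simp
  rw [heq] at this
  rw [ge_iff_le, one_mul]
  exact this
end
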